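/- Let l, u ∈ ℝⁿ with l ≤ u componentwise, and let Z = {φ ∈ ℝⁿ : l ≤ C_Z φ ≤ u} where C_Z is the lower bidiagonal matrix with 1 on the diagonal and −1 on the subdiagonal. For a ∈ [0,1], define φ_i(a) = L l + a L(u − l), with L = C_Z^{−1} the all-ones lower triangular matrix. Then φ_i(a) ∈ Z for all a ∈ [0,1], the last component satisfies φ_{i,n}(a) = Σ_j l_j + a Σ_j (u_j − l_j), and for bounds 0 ≤ m ≤ M: the set {φ ∈ Z : m ≤ φ_n ≤ M} is nonempty if and only if [a⁻, a⁺] ∩ [0,1] ≠ ∅, where a⁻, a⁺ are the values with φ_{i,n}(a⁻) = m and φ_{i,n}(a⁺) = M (assuming Σ_j(u_j−l_j) > 0). -/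
import Mathlib


open Matrix

/-- Feasibility test for the capture problem zonotope
`Z = {φ : l ≤ C_Z φ ≤ u}`. The segment `φᵢ(a) = L l + a L(u − l)` (with `L = C_Z⁻¹` the
all-ones lower triangular matrix) lies in `Z` for `a ∈ [0,1]`, its last component is
`Σⱼ lⱼ + a Σⱼ (uⱼ − lⱼ)`, and for bounds `0 ≤ m ≤ M`, `{φ ∈ Z : m ≤ φₙ ≤ M}` is nonempty
iff `[a⁻, a⁺] ∩ [0,1] ≠ ∅`, where `φᵢ,ₙ(a⁻) = m`, `φᵢ,ₙ(a⁺) = M` (given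
`Σⱼ(uⱼ − lⱼ) > 0`). -/
theorem capture_zonotope_feasibility (n : ℕ)
    (C L : Matrix (Fin (n + 1)) (Fin (n + 1)) ℝ)
    (hC : ∀ i j : Fin (n + 1), C i j =
      if i = j then 1 else if (j : ℕ) + 1 = (i : ℕ) then -1 else 0)
    (hL : ∀ i j : Fin (n + 1), L i j = if j ≤ i then 1 else 0)
    (l u : Fin (n + 1) → ℝ) (hlu : l ≤ u)
    (φi : ℝ → (Fin (n + 1) → ℝ))
    (hφi : ∀ a : ℝ, φi a = L.mulVec l + a • L.mulVec (u - l))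
    (m M : ℝ) (hm : 0 ≤ m) (hmM : m ≤ M)
    (hd : 0 < ∑ j, (u j - l j))
    (am ap : ℝ)
    (ham : am = (m - ∑ j, l j) / ∑ j, (u j - l j))
    (hap : ap = (M - ∑ j, l j) / ∑ j, (u j - l j)) :
    (∀ a ∈ Set.Icc (0:ℝ) 1, l ≤ C.mulVec (φi a) ∧ C.mulVec (φi a) ≤ u) ∧
    (∀ a : ℝ, φi a (Fin.last n) = (∑ j, l j) + a * ∑ j, (u j - l j)) ∧
    ((∃ φ : Fin (n + 1) → ℝ, (l ≤ C.mulVec φ ∧ C.mulVec φ ≤ u) ∧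
        m ≤ φ (Fin.last n) ∧ φ (Fin.last n) ≤ M) ↔
      (Set.Icc am ap ∩ Set.Icc (0:ℝ) 1).Nonempty) := by
  -- `L.mulVec v` is the vector of partial sums
  have hLv : ∀ (v : Fin (n+1) → ℝ) (j : Fin (n+1)),
      L.mulVec v j = ∑ k ∈ Finset.Iic j, v k := by
    intro v j
    simp only [mulVec, dotProduct, hL, ite_mul, one_mul, zero_mul]
    rw [Finset.sum_ite, Finset.sum_const_zero, add_zero]
    congr 1
    ext k; simp
  -- `C` inverts `L`
  have hCL : ∀ v : Fin (n+1) → ℝ, C.mulVec (L.mulVec v) = v := by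
    intro v
    funext i
    have hw := hLv v
    set w := L.mulVec v with hwdef
    simp only [mulVec, dotProduct, hC]
    have hsplit : ∀ j : Fin (n+1),
        (if i = j then (1:ℝ) else if (j : ℕ) + 1 = (i : ℕ) then -1 else 0) * w j
        = (if j = i then w j else 0) + (if (j : ℕ) + 1 = (i : ℕ) then -w j else 0) := by
      intro j
      rcases eq_or_ne i j with h | h
      · subst h; simp
      · by_cases hj : (j:ℕ)+1 = (i:ℕ) <;> simp [h, Ne.symm h, hj]
    rw [Finset.sum_congr rfl fun j _ => hsplit j, Finset.sum_add_distrib,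
      Finset.sum_ite_eq' Finset.univ i w]
    simp only [Finset.mem_univ, if_true]
    induction i using Fin.cases with
    | zero =>
        have h1 : ∀ j : Fin (n+1), ¬ ((j : ℕ) + 1 = ((0 : Fin (n+1)) : ℕ)) := by simp
        have h2 : Finset.Iic (0 : Fin (n+1)) = {0} := by ext k; simp [Fin.le_zero_iff]
        simp [h1, hw, h2]
    | succ t =>
        have hcond : ∀ j : Fin (n+1),
            ((j : ℕ) + 1 = ((t.succ : Fin (n+1)) : ℕ)) ↔ j = t.castSucc := by
          intro j; simp [Fin.ext_iff]
        rw [Finset.sum_congr rfl fun j _ => by rw [if_congr (hcond j) rfl rfl],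
          Finset.sum_ite_eq' Finset.univ t.castSucc (fun j => -w j)]
        simp only [Finset.mem_univ, if_true, hw]
        have hins : Finset.Iic (Fin.succ t) = insert (Fin.succ t) (Finset.Iic t.castSucc) := by
          ext k
          simp only [Finset.mem_insert, Finset.mem_Iic, Fin.le_castSucc_iff]
          rw [le_iff_lt_or_eq, or_comm]
        rw [hins, Finset.sum_insert (by simp [Fin.le_castSucc_iff])]
        ring
  -- `C.mulVec (φi a) = l + a • (u - l)`
  have hCφ : ∀ a : ℝ, C.mulVec (φi a) = l + a • (u - l) := by
    intro a
    rw [hφi, Matrix.mulVec_add, Matrix.mulVec_smul, hCL, hCL]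
  -- the sum of components of `C.mulVec φ` telescopes to the last component of `φ`
  have hsum : ∀ φ : Fin (n+1) → ℝ, ∑ i, C.mulVec φ i = φ (Fin.last n) := by
    intro φ
    have hcol : ∀ j : Fin (n+1), ∑ i, C i j = if j = Fin.last n then (1:ℝ) else 0 := by
      intro j
      induction j using Fin.lastCases with
      | last =>
          have h1 : ∀ i : Fin (n+1), ¬ (n + 1 = (i : ℕ)) := by
            intro i h; have := i.isLt; omega
          simp [hC, h1]
      | cast t =>
          have h2 : ∀ i : Fin (n+1), ((t.castSucc : ℕ) + 1 = (i : ℕ)) ↔ i = t.succ := by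
            intro i; simp [Fin.ext_iff]; omega
          have hsplit : ∀ i : Fin (n+1),
              (if i = t.castSucc then (1:ℝ) else if (t.castSucc : ℕ) + 1 = (i : ℕ) then -1 else 0)
              = (if i = t.castSucc then (1:ℝ) else 0) + (if i = t.succ then -1 else 0) := by
            intro i
            rcases eq_or_ne i t.castSucc with h | h
            · subst h; simp [Fin.ext_iff]
            · rw [if_neg h, if_neg h, if_congr (h2 i) rfl rfl, zero_add]
          have hne : t.castSucc ≠ Fin.last n := by
            simp [Fin.ext_iff]; omega
          simp only [hC]
          rw [Finset.sum_congr rfl fun i _ => hsplit i, Finset.sum_add_distrib]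
          simp [hne]
    calc ∑ i, C.mulVec φ i = ∑ j, (∑ i, C i j) * φ j := by
          simp only [mulVec, dotProduct, Finset.sum_mul]
          rw [Finset.sum_comm]
      _ = φ (Fin.last n) := by
          simp [hcol, ite_mul, Finset.sum_ite_eq Finset.univ (Fin.last n)]
  -- part 1
  have part1 : ∀ a ∈ Set.Icc (0:ℝ) 1, l ≤ C.mulVec (φi a) ∧ C.mulVec (φi a) ≤ u := by
    rintro a ⟨ha0, ha1⟩
    rw [hCφ]
    constructor
    · intro i
      have := hlu i
      simp only [Pi.add_apply, Pi.smul_apply, Pi.sub_apply, smul_eq_mul]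
      nlinarith
    · intro i
      have := hlu i
      simp only [Pi.add_apply, Pi.smul_apply, Pi.sub_apply, smul_eq_mul]
      nlinarith
  -- part 2
  have hIicLast : Finset.Iic (Fin.last n) = Finset.univ := by
    ext k; simp [Fin.le_last]
  have part2 : ∀ a : ℝ, φi a (Fin.last n) = (∑ j, l j) + a * ∑ j, (u j - l j) := by
    intro a
    rw [hφi]
    simp only [Pi.add_apply, Pi.smul_apply, smul_eq_mul, hLv, hIicLast]
    simp [Pi.sub_apply]
  refine ⟨part1, part2, ?_⟩
  set d : ℝ := ∑ j, (u j - l j) with hddef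
  have hdsub : d = (∑ j, u j) - ∑ j, l j := by
    rw [hddef, Finset.sum_sub_distrib]
  constructor
  · rintro ⟨φ, ⟨hl', hu'⟩, hm', hM'⟩
    refine ⟨(φ (Fin.last n) - ∑ j, l j) / d, ⟨⟨?_, ?_⟩, ?_, ?_⟩⟩
    · rw [ham]
      exact div_le_div_of_nonneg_right (by linarith) hd.le |>.trans_eq rfl
    · rw [hap]
      exact div_le_div_of_nonneg_right (by linarith) hd.le |>.trans_eq rfl
    · have hlsum : (∑ j, l j) ≤ ∑ i, C.mulVec φ i := Finset.sum_le_sum fun i _ => hl' i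
      rw [hsum] at hlsum
      exact div_nonneg (by linarith) hd.le
    · have husum : (∑ i, C.mulVec φ i) ≤ ∑ j, u j := Finset.sum_le_sum fun i _ => hu' i
      rw [hsum] at husum
      rw [div_le_one hd]
      linarith
  · rintro ⟨a, ⟨ham', hap'⟩, ha01⟩
    refine ⟨φi a, part1 a ha01, ?_, ?_⟩
    · rw [part2]
      rw [ham, div_le_iff₀ hd] at ham'
      linarith
    · rw [part2]
      rw [hap, le_div_iff₀ hd] at hap'
      linarith
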